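/- Let n ≥ 5 be odd and consider in ℝ^n the set S = {ε_{2i-1}+ε_{2i} : 1 ≤ i ≤ (n−5)/2} ∪ {ε_{n-4}+ε_{n-2}, ε_{n-3}+ε_n, ε_{n-3}−ε_n} ∪ {ε_{n−3−k} − ε_k : 1 ≤ k ≤ (n−5)/2}. Let h_Λ = span{α^∨ : α ∈ π'} ⊕ k·H^{-1}(ε_n) where π' = π \ {α_{n-3}, α_{n-1}, α_n} in type D_n. Then the restrictions of the elements of S to h_Λ form a basis of h_Λ^*; in particular |S| = n − 2 = dim h_Λ. -/

import Mathlib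

open scoped RealInnerProductSpace

/-- 1-based orthonormal basis vectors `ε_k` of `ℝ^n` (zero out of range). -/
noncomputable def eps (n k : ℕ) : EuclideanSpace ℝ (Fin n) :=
  if h : 1 ≤ k ∧ k ≤ n then EuclideanSpace.single ⟨k - 1, by omega⟩ (1 : ℝ) else 0

/-- The restriction to the subspace `W` of the linear functional `⟪x, ·⟫`
(i.e. the restriction to `W` of a weight `x`, under the identification of
weights with vectors given by the form). -/
noncomputable def restrictedInner {n : ℕ} (x : EuclideanSpace ℝ (Fin n))
    (W : Submodule ℝ (EuclideanSpace ℝ (Fin n))) : Module.Dual ℝ W where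
  toFun w := ⟪x, (w : EuclideanSpace ℝ (Fin n))⟫
  map_add' a b := by simp [inner_add_right]
  map_smul' c a := by simp [inner_smul_right]

/-- The coroots of type `D_n` : `α_k^∨ = ε_k - ε_{k+1}` for `k < n` and
`α_n^∨ = ε_{n-1} + ε_n`. -/
noncomputable def corootD (n k : ℕ) : EuclideanSpace ℝ (Fin n) :=
  if k = n then eps n (n - 1) + eps n n else eps n k - eps n (k + 1)

namespace St19

lemma eps_eq {N : ℕ} (k : ℕ) (h1 : 1 ≤ k) (h2 : k ≤ N) :
    eps N k = EuclideanSpace.single (⟨k-1, by omega⟩ : Fin N) 1 := by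
  simp [eps, h1, h2]

lemma eps_succ {N : ℕ} (i : Fin N) : eps N (↑i+1) = EuclideanSpace.single i 1 := by
  rw [eps_eq (↑i+1) (by omega) (by omega)]
  simp

lemma inner_eps {N : ℕ} (a b : ℕ) :
    ⟪eps N a, eps N b⟫ = if a = b ∧ 1 ≤ a ∧ a ≤ N then 1 else 0 := by
  by_cases hab : a = b
  · subst hab
    by_cases ha : 1 ≤ a ∧ a ≤ N
    · rw [eps_eq a ha.1 ha.2, EuclideanSpace.inner_single_left,
        EuclideanSpace.single_apply, if_pos rfl, if_pos ⟨rfl, ha⟩]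
      simp
    · have h0 : eps N a = 0 := by simp [eps, ha]
      rw [h0, if_neg (by tauto)]
      simp
  · rw [if_neg (by tauto)]
    by_cases ha : 1 ≤ a ∧ a ≤ N
    · by_cases hb : 1 ≤ b ∧ b ≤ N
      · rw [eps_eq a ha.1 ha.2, eps_eq b hb.1 hb.2, EuclideanSpace.inner_single_left,
          EuclideanSpace.single_apply, if_neg (by simp only [ne_eq, Fin.mk.injEq]; omega)]
        simp
      · have h0 : eps N b = 0 := by simp [eps, hb]
        rw [h0]; simp
    · have h0 : eps N a = 0 := by simp [eps, ha]
      rw [h0]; simp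

lemma inner_eps_sum {N M a : ℕ} (hM : M ≤ N) (ha : 1 ≤ a) (haN : a ≤ N) :
    ⟪eps N a, ∑ j ∈ Finset.range M, eps N (j+1)⟫ = if a ≤ M then 1 else 0 := by
  rw [inner_sum]
  have : ∀ j ∈ Finset.range M, ⟪eps N a, eps N (j+1)⟫ = if j = a - 1 then (1:ℝ) else 0 := by
    intro j hj
    rw [inner_eps]
    simp only [Finset.mem_range] at hj
    by_cases h : j = a - 1
    · have : a = j + 1 := by omega
      simp [h, this.symm, ha, haN, ← this]
    · have : ¬(a = j+1 ∧ 1 ≤ a ∧ a ≤ N) := by rintro ⟨rfl, _⟩; omega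
      simp [h, this]
  rw [Finset.sum_congr rfl this, Finset.sum_ite_eq' (Finset.range M) (a-1) (fun _ => (1:ℝ))]
  simp only [Finset.mem_range]
  by_cases h : a ≤ M
  · rw [if_pos (by omega), if_pos h]
  · rw [if_neg (by omega), if_neg h]


noncomputable def uvec (m : ℕ) : EuclideanSpace ℝ (Fin (2*m+5)) :=
  ∑ j ∈ Finset.range (2*m+2), eps (2*m+5) (j+1)

noncomputable def vvec (m : ℕ) : EuclideanSpace ℝ (Fin (2*m+5)) :=
  eps (2*m+5) (2*m+3) + eps (2*m+5) (2*m+4)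

noncomputable def Efun (m : ℕ) : ℕ → EuclideanSpace ℝ (Fin (2*m+5)) := fun i =>
  if i < m then eps (2*m+5) (2*i+1) + eps (2*m+5) (2*i+2)
  else if i = m then eps (2*m+5) (2*m+1) + eps (2*m+5) (2*m+3)
  else if i = m+1 then eps (2*m+5) (2*m+2) + eps (2*m+5) (2*m+5)
  else if i = m+2 then eps (2*m+5) (2*m+2) - eps (2*m+5) (2*m+5)
  else if i < 2*m+3 then eps (2*m+5) (2*m+2 - (i-(m+2))) - eps (2*m+5) (i-(m+2))
  else if i = 2*m+3 then uvec m
  else vvec m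

noncomputable def E2fun (m : ℕ) : ℕ → EuclideanSpace ℝ (Fin (2*m+5)) := fun i =>
  if i < 2*m+1 then eps (2*m+5) (i+1) - eps (2*m+5) (i+2)
  else if i = 2*m+1 then eps (2*m+5) (2*m+3) - eps (2*m+5) (2*m+4)
  else if i = 2*m+2 then eps (2*m+5) (2*m+5)
  else if i = 2*m+3 then uvec m
  else vvec m

lemma Efun_A {m i : ℕ} (h : i < m) :
    Efun m i = eps (2*m+5) (2*i+1) + eps (2*m+5) (2*i+2) := by
  simp [Efun, h]

lemma Efun_B1 (m : ℕ) : Efun m m = eps (2*m+5) (2*m+1) + eps (2*m+5) (2*m+3) := by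
  simp [Efun]

lemma Efun_B2 (m : ℕ) : Efun m (m+1) = eps (2*m+5) (2*m+2) + eps (2*m+5) (2*m+5) := by
  have h1 : ¬ (m+1 < m) := by omega
  have h2 : m+1 ≠ m := by omega
  simp [Efun, h1, h2]

lemma Efun_B3 (m : ℕ) : Efun m (m+2) = eps (2*m+5) (2*m+2) - eps (2*m+5) (2*m+5) := by
  have h1 : ¬ (m+2 < m) := by omega
  have h2 : m+2 ≠ m := by omega
  have h3 : m+2 ≠ m+1 := by omega
  simp [Efun, h1, h2, h3]

lemma Efun_C {m k : ℕ} (h1 : 1 ≤ k) (h2 : k ≤ m) :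
    Efun m (m+2+k) = eps (2*m+5) (2*m+2-k) - eps (2*m+5) k := by
  have c1 : ¬ (m+2+k < m) := by omega
  have c2 : m+2+k ≠ m := by omega
  have c3 : m+2+k ≠ m+1 := by omega
  have c4 : m+2+k ≠ m+2 := by omega
  have c5 : m+2+k < 2*m+3 := by omega
  have c6 : m+2+k-(m+2) = k := by omega
  simp only [Efun, if_neg c1, if_neg c2, if_neg c3, if_neg c4, if_pos c5, c6]

lemma Efun_u (m : ℕ) : Efun m (2*m+3) = uvec m := by
  have c1 : ¬ (2*m+3 < m) := by omega
  have c2 : 2*m+3 ≠ m := by omega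
  have c3 : 2*m+3 ≠ m+1 := by omega
  have c4 : 2*m+3 ≠ m+2 := by omega
  have c5 : ¬ (2*m+3 < 2*m+3) := by omega
  simp only [Efun, if_neg c1, if_neg c2, if_neg c3, if_neg c4, if_neg c5]
  simp

lemma Efun_v (m : ℕ) : Efun m (2*m+4) = vvec m := by
  have c1 : ¬ (2*m+4 < m) := by omega
  have c2 : 2*m+4 ≠ m := by omega
  have c3 : 2*m+4 ≠ m+1 := by omega
  have c4 : 2*m+4 ≠ m+2 := by omega
  have c5 : ¬ (2*m+4 < 2*m+3) := by omega
  have c6 : 2*m+4 ≠ 2*m+3 := by omega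
  simp only [Efun, if_neg c1, if_neg c2, if_neg c3, if_neg c4, if_neg c5, if_neg c6]

lemma E2fun_lo {m i : ℕ} (h : i < 2*m+1) :
    E2fun m i = eps (2*m+5) (i+1) - eps (2*m+5) (i+2) := by
  simp [E2fun, h]

lemma E2fun_hi (m : ℕ) :
    E2fun m (2*m+1) = eps (2*m+5) (2*m+3) - eps (2*m+5) (2*m+4) := by
  simp [E2fun]

lemma E2fun_n (m : ℕ) : E2fun m (2*m+2) = eps (2*m+5) (2*m+5) := by
  have c1 : ¬ (2*m+2 < 2*m+1) := by omega
  have c2 : 2*m+2 ≠ 2*m+1 := by omega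
  simp [E2fun, c1, c2]

lemma E2fun_u (m : ℕ) : E2fun m (2*m+3) = uvec m := by
  have c1 : ¬ (2*m+3 < 2*m+1) := by omega
  have c2 : 2*m+3 ≠ 2*m+1 := by omega
  have c3 : 2*m+3 ≠ 2*m+2 := by omega
  simp [E2fun, c1, c2, c3]

lemma E2fun_v (m : ℕ) : E2fun m (2*m+4) = vvec m := by
  have c1 : ¬ (2*m+4 < 2*m+1) := by omega
  have c2 : 2*m+4 ≠ 2*m+1 := by omega
  have c3 : 2*m+4 ≠ 2*m+2 := by omega
  have c4 : 2*m+4 ≠ 2*m+3 := by omega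
  simp [E2fun, c1, c2, c3, c4]

lemma sumA {N : ℕ} (K : ℕ) :
    ∑ i ∈ Finset.range K, (eps N (2*i+1) + eps N (2*i+2))
      = ∑ j ∈ Finset.range (2*K), eps N (j+1) := by
  induction K with
  | zero => simp
  | succ K ih =>
      rw [Finset.sum_range_succ, ih]
      have : 2*(K+1) = (2*K+1)+1 := by ring
      rw [this, Finset.sum_range_succ, Finset.sum_range_succ]
      have e1 : 2*K+1+1 = 2*K+2 := by ring
      rw [e1]
      abel


def f (m t : ℕ) : ℕ :=
  if t = 0 then 2*m+1
  else if t % 4 = 1 ∨ t % 4 = 2 then t/2 + 1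
  else if t % 4 = 3 then 2*m - 2*(t/4)
  else 2*m+1 - t/2

lemma f_zero (m : ℕ) : f m 0 = 2*m+1 := by simp [f]

lemma f_12 {m t : ℕ} (h : t % 4 = 1 ∨ t % 4 = 2) : f m t = t/2 + 1 := by
  have h0 : t ≠ 0 := by omega
  simp [f, h0, h]

lemma f_3 {m t : ℕ} (h : t % 4 = 3) : f m t = 2*m - 2*(t/4) := by
  have h0 : t ≠ 0 := by omega
  have h1 : ¬ (t % 4 = 1 ∨ t % 4 = 2) := by omega
  simp [f, h0, h1, h]

lemma f_0 {m t : ℕ} (h : t % 4 = 0) (h0 : t ≠ 0) : f m t = 2*m+1 - t/2 := by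
  have h1 : ¬ (t % 4 = 1 ∨ t % 4 = 2) := by omega
  have h2 : ¬ (t % 4 = 3) := by omega
  simp [f, h0, h1, h2]

lemma chain {m : ℕ} (V : Submodule ℝ (EuclideanSpace ℝ (Fin (2*m+5))))
    (hA : ∀ i, i < m → eps (2*m+5) (2*i+1) + eps (2*m+5) (2*i+2) ∈ V)
    (hC : ∀ k, 1 ≤ k → k ≤ m → eps (2*m+5) (2*m+2-k) - eps (2*m+5) k ∈ V)
    (h0 : eps (2*m+5) (2*m+1) ∈ V) :
    ∀ j, 1 ≤ j → j ≤ 2*m+1 → eps (2*m+5) j ∈ V := by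
  have aux : ∀ t, t ≤ 2*m → eps (2*m+5) (f m t) ∈ V := by
    intro t
    induction t with
    | zero => intro _; rw [f_zero]; exact h0
    | succ t ih =>
        intro ht
        have iht := ih (by omega)
        have hlt : t % 4 = 0 ∨ t % 4 = 1 ∨ t % 4 = 2 ∨ t % 4 = 3 := by omega
        rcases hlt with h4 | h4 | h4 | h4
        · -- t % 4 = 0 : C-edge from high to low odd
          by_cases ht0 : t = 0
          · subst ht0
            rw [f_zero] at iht
            have hf : f m 1 = 1 := by rw [f_12 (by norm_num)]
            rw [hf]
            have hm1 : 1 ≤ m := by omega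
            have hc := hC 1 le_rfl hm1
            have e : 2*m+2-1 = 2*m+1 := by omega
            rw [e] at hc
            have := V.sub_mem h0 hc
            simpa using this
          · -- t = 4b, b ≥ 1
            have hft : f m t = 2*m+1 - t/2 := f_0 h4 ht0
            have hft1 : f m (t+1) = (t+1)/2 + 1 := f_12 (by omega)
            set b := t/4 with hb
            have htb : t = 4*b := by omega
            have e1 : f m t = 2*m+1-2*b := by rw [hft]; omega
            have e2 : f m (t+1) = 2*b+1 := by rw [hft1]; omega
            rw [e1] at iht
            rw [e2]
            have hk : 2*b+1 ≤ m := by omega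
            have hc := hC (2*b+1) (by omega) hk
            have e3 : 2*m+2-(2*b+1) = 2*m+1-2*b := by omega
            rw [e3] at hc
            have := V.sub_mem iht hc
            simpa using this
        · -- t % 4 = 1 : A-edge
          have hft : f m t = t/2+1 := f_12 (Or.inl h4)
          have hft1 : f m (t+1) = (t+1)/2+1 := f_12 (by omega)
          set b := t/4 with hb
          have htb : t = 4*b+1 := by omega
          have e1 : f m t = 2*b+1 := by rw [hft]; omega
          have e2 : f m (t+1) = 2*b+2 := by rw [hft1]; omega
          rw [e1] at iht
          rw [e2]
          have ha := hA b (by omega)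
          have e3 : 2*b+1 = 2*b+1 := rfl
          have := V.sub_mem ha iht
          simpa using this
        · -- t % 4 = 2 : C-edge low to high
          have hft : f m t = t/2+1 := f_12 (Or.inr h4)
          have hft1 : f m (t+1) = 2*m-2*((t+1)/4) := f_3 (by omega)
          set b := t/4 with hb
          have htb : t = 4*b+2 := by omega
          have e1 : f m t = 2*b+2 := by rw [hft]; omega
          have e2 : f m (t+1) = 2*m-2*b := by rw [hft1]; omega
          rw [e1] at iht
          rw [e2]
          have hk : 2*b+2 ≤ m := by omega
          have hc := hC (2*b+2) (by omega) hk
          have e3 : 2*m+2-(2*b+2) = 2*m-2*b := by omega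
          rw [e3] at hc
          have := V.add_mem hc iht
          simpa using this
        · -- t % 4 = 3 : A-edge high
          have hft : f m t = 2*m-2*(t/4) := f_3 h4
          have hft1 : f m (t+1) = 2*m+1-(t+1)/2 := f_0 (by omega) (by omega)
          set b := t/4 with hb
          have htb : t = 4*b+3 := by omega
          have e1 : f m t = 2*m-2*b := hft
          have e2 : f m (t+1) = 2*m-2*b-1 := by rw [hft1]; omega
          rw [e1] at iht
          rw [e2]
          have hbm : 2*b+2 ≤ m := by omega
          have ha := hA (m-b-1) (by omega)
          have e3 : 2*(m-b-1)+1 = 2*m-2*b-1 := by omega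
          have e4 : 2*(m-b-1)+2 = 2*m-2*b := by omega
          rw [e3, e4] at ha
          have := V.sub_mem ha iht
          simpa using this
  intro j hj1 hj2
  -- find t with f m t = j
  obtain ⟨t, ht, hft⟩ : ∃ t, t ≤ 2*m ∧ f m t = j := by
    by_cases hjtop : j = 2*m+1
    · exact ⟨0, by omega, by rw [f_zero, hjtop]⟩
    · rcases Nat.even_or_odd j with hev | hod
      · obtain ⟨c, hc⟩ := hev
        by_cases hle : j ≤ m+1
        · refine ⟨2*j-2, by omega, ?_⟩
          rw [f_12 (by omega)]; omega
        · refine ⟨2*(2*m-j)+3, by omega, ?_⟩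
          rw [f_3 (by omega)]; omega
      · obtain ⟨c, hc⟩ := hod
        by_cases hle : j ≤ m
        · refine ⟨2*j-1, by omega, ?_⟩
          rw [f_12 (by omega)]; omega
        · refine ⟨2*(2*m-j)+2, by omega, ?_⟩
          rw [f_0 (by omega) (by omega)]; omega
  rw [← hft]
  exact aux t ht


lemma span_Efun_top (m : ℕ) :
    ⊤ ≤ Submodule.span ℝ (Set.range (fun j : Fin (2*m+5) => Efun m ↑j)) := by
  set V := Submodule.span ℝ (Set.range (fun j : Fin (2*m+5) => Efun m ↑j)) with hV
  have mem : ∀ i : ℕ, i ≤ 2*m+4 → Efun m i ∈ V := by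
    intro i h
    exact Submodule.subset_span ⟨⟨i, by omega⟩, rfl⟩
  have hB2 : eps (2*m+5) (2*m+2) + eps (2*m+5) (2*m+5) ∈ V := by
    rw [← Efun_B2]; exact mem (m+1) (by omega)
  have hB3 : eps (2*m+5) (2*m+2) - eps (2*m+5) (2*m+5) ∈ V := by
    rw [← Efun_B3]; exact mem (m+2) (by omega)
  have h22 : eps (2*m+5) (2*m+2) ∈ V := by
    have heq : eps (2*m+5) (2*m+2) = (2:ℝ)⁻¹ •
        ((eps (2*m+5) (2*m+2) + eps (2*m+5) (2*m+5)) +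
         (eps (2*m+5) (2*m+2) - eps (2*m+5) (2*m+5))) := by
      module
    rw [heq]; exact V.smul_mem _ (V.add_mem hB2 hB3)
  have h25 : eps (2*m+5) (2*m+5) ∈ V := by
    have heq : eps (2*m+5) (2*m+5) = (2:ℝ)⁻¹ •
        ((eps (2*m+5) (2*m+2) + eps (2*m+5) (2*m+5)) -
         (eps (2*m+5) (2*m+2) - eps (2*m+5) (2*m+5))) := by
      module
    rw [heq]; exact V.smul_mem _ (V.sub_mem hB2 hB3)
  have hsumA : (∑ j ∈ Finset.range (2*m), eps (2*m+5) (j+1)) ∈ V := by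
    rw [← sumA m]
    refine Submodule.sum_mem V ?_
    intro i hi
    simp only [Finset.mem_range] at hi
    rw [← Efun_A hi]
    exact mem i (by omega)
  have huv : uvec m ∈ V := by rw [← Efun_u]; exact mem (2*m+3) (by omega)
  have hu : uvec m = (∑ j ∈ Finset.range (2*m), eps (2*m+5) (j+1))
      + eps (2*m+5) (2*m+1) + eps (2*m+5) (2*m+2) := by
    have e1 : 2*m+2 = (2*m+1)+1 := rfl
    have e2 : 2*m+1 = (2*m)+1 := rfl
    rw [uvec, e1, Finset.sum_range_succ, e2, Finset.sum_range_succ]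
  have h21 : eps (2*m+5) (2*m+1) ∈ V := by
    have heq : eps (2*m+5) (2*m+1) = uvec m
        - (∑ j ∈ Finset.range (2*m), eps (2*m+5) (j+1)) - eps (2*m+5) (2*m+2) := by
      rw [hu]; abel
    rw [heq]; exact V.sub_mem (V.sub_mem huv hsumA) h22
  have h23 : eps (2*m+5) (2*m+3) ∈ V := by
    have hB1 : eps (2*m+5) (2*m+1) + eps (2*m+5) (2*m+3) ∈ V := by
      rw [← Efun_B1]; exact mem m (by omega)
    have heq : eps (2*m+5) (2*m+3)
        = (eps (2*m+5) (2*m+1) + eps (2*m+5) (2*m+3)) - eps (2*m+5) (2*m+1) := by abel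
    rw [heq]; exact V.sub_mem hB1 h21
  have h24 : eps (2*m+5) (2*m+4) ∈ V := by
    have hv : vvec m ∈ V := by rw [← Efun_v]; exact mem (2*m+4) (by omega)
    have heq : eps (2*m+5) (2*m+4) = vvec m - eps (2*m+5) (2*m+3) := by
      rw [vvec]; abel
    rw [heq]; exact V.sub_mem hv h23
  have hlow : ∀ j, 1 ≤ j → j ≤ 2*m+1 → eps (2*m+5) j ∈ V := by
    refine chain V ?_ ?_ h21
    · intro i hi; rw [← Efun_A hi]; exact mem i (by omega)
    · intro k h1 h2; rw [← Efun_C h1 h2]; exact mem (m+2+k) (by omega)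
  have hsingle : ∀ i : Fin (2*m+5), EuclideanSpace.single i (1:ℝ) ∈ V := by
    intro i
    rw [← eps_succ i]
    have hj : 1 ≤ (i:ℕ)+1 ∧ (i:ℕ)+1 ≤ 2*m+5 := ⟨by omega, by omega⟩
    rcases (by omega : (i:ℕ)+1 ≤ 2*m+1 ∨ (i:ℕ)+1 = 2*m+2 ∨ (i:ℕ)+1 = 2*m+3
        ∨ (i:ℕ)+1 = 2*m+4 ∨ (i:ℕ)+1 = 2*m+5) with h | h | h | h | h
    · exact hlow _ (by omega) h
    · rw [h]; exact h22
    · rw [h]; exact h23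
    · rw [h]; exact h24
    · rw [h]; exact h25
  have hspan := (EuclideanSpace.basisFun (Fin (2*m+5)) ℝ).toBasis.span_eq
  refine le_trans (le_of_eq hspan.symm) (Submodule.span_le.mpr ?_)
  rintro _ ⟨i, rfl⟩
  have : (EuclideanSpace.basisFun (Fin (2*m+5)) ℝ).toBasis i
      = EuclideanSpace.single i 1 := by
    simp [EuclideanSpace.basisFun_apply]
  rw [this]
  exact hsingle i


lemma span_E2fun_top (m : ℕ) :
    ⊤ ≤ Submodule.span ℝ (Set.range (fun j : Fin (2*m+5) => E2fun m ↑j)) := by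
  set V := Submodule.span ℝ (Set.range (fun j : Fin (2*m+5) => E2fun m ↑j)) with hV
  have mem : ∀ i : ℕ, i ≤ 2*m+4 → E2fun m i ∈ V := by
    intro i h
    exact Submodule.subset_span ⟨⟨i, by omega⟩, rfl⟩
  have tele : ∀ j, j ≤ 2*m+1 → eps (2*m+5) 1 - eps (2*m+5) (j+1) ∈ V := by
    intro j
    induction j with
    | zero => intro _; simp
    | succ j ih =>
        intro hj
        have h1 := ih (by omega)
        have h2 : eps (2*m+5) (j+1) - eps (2*m+5) (j+2) ∈ V := by
          rw [← E2fun_lo (show j < 2*m+1 by omega)]; exact mem j (by omega)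
        have := V.add_mem h1 h2
        have heq : eps (2*m+5) 1 - eps (2*m+5) (j+1+1)
            = (eps (2*m+5) 1 - eps (2*m+5) (j+1)) + (eps (2*m+5) (j+1) - eps (2*m+5) (j+2)) := by
          have e : j+1+1 = j+2 := rfl
          rw [e]; abel
        rw [heq]; exact this
  have huv : uvec m ∈ V := by rw [← E2fun_u]; exact mem (2*m+3) (by omega)
  have h1mem : eps (2*m+5) 1 ∈ V := by
    have hsum : (∑ j ∈ Finset.range (2*m+2), (eps (2*m+5) 1 - eps (2*m+5) (j+1))) ∈ V := by
      refine Submodule.sum_mem V ?_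
      intro j hj
      simp only [Finset.mem_range] at hj
      exact tele j (by omega)
    have hcomb : (((2*m+2 : ℕ) : ℝ)) • eps (2*m+5) 1
        = uvec m + ∑ j ∈ Finset.range (2*m+2), (eps (2*m+5) 1 - eps (2*m+5) (j+1)) := by
      rw [Finset.sum_sub_distrib, Finset.sum_const, Finset.card_range, uvec]
      rw [← Nat.cast_smul_eq_nsmul ℝ]
      abel
    have hne : ((2*m+2 : ℕ) : ℝ) ≠ 0 := by positivity
    have : (((2*m+2 : ℕ) : ℝ)) • eps (2*m+5) 1 ∈ V := by
      rw [hcomb]; exact V.add_mem huv hsum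
    have := V.smul_mem (((2*m+2 : ℕ) : ℝ))⁻¹ this
    rwa [inv_smul_smul₀ hne] at this
  have hlow : ∀ j, j ≤ 2*m+1 → eps (2*m+5) (j+1) ∈ V := by
    intro j hj
    have heq : eps (2*m+5) (j+1)
        = eps (2*m+5) 1 - (eps (2*m+5) 1 - eps (2*m+5) (j+1)) := by abel
    rw [heq]; exact V.sub_mem h1mem (tele j hj)
  have h23 : eps (2*m+5) (2*m+3) ∈ V := by
    have hd : eps (2*m+5) (2*m+3) - eps (2*m+5) (2*m+4) ∈ V := by
      rw [← E2fun_hi]; exact mem (2*m+1) (by omega)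
    have hv : vvec m ∈ V := by rw [← E2fun_v]; exact mem (2*m+4) (by omega)
    rw [vvec] at hv
    have heq : eps (2*m+5) (2*m+3) = (2:ℝ)⁻¹ •
        ((eps (2*m+5) (2*m+3) - eps (2*m+5) (2*m+4))
          + (eps (2*m+5) (2*m+3) + eps (2*m+5) (2*m+4))) := by module
    rw [heq]; exact V.smul_mem _ (V.add_mem hd hv)
  have h24 : eps (2*m+5) (2*m+4) ∈ V := by
    have hv : vvec m ∈ V := by rw [← E2fun_v]; exact mem (2*m+4) (by omega)
    rw [vvec] at hv
    have heq : eps (2*m+5) (2*m+4)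
        = (eps (2*m+5) (2*m+3) + eps (2*m+5) (2*m+4)) - eps (2*m+5) (2*m+3) := by abel
    rw [heq]; exact V.sub_mem hv h23
  have h25 : eps (2*m+5) (2*m+5) ∈ V := by
    rw [← E2fun_n]; exact mem (2*m+2) (by omega)
  have hsingle : ∀ i : Fin (2*m+5), EuclideanSpace.single i (1:ℝ) ∈ V := by
    intro i
    rw [← eps_succ i]
    rcases (by omega : (i:ℕ)+1 ≤ 2*m+2 ∨ (i:ℕ)+1 = 2*m+3
        ∨ (i:ℕ)+1 = 2*m+4 ∨ (i:ℕ)+1 = 2*m+5) with h | h | h | h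
    · have : (i:ℕ) ≤ 2*m+1 := by omega
      exact hlow _ this
    · rw [h]; exact h23
    · rw [h]; exact h24
    · rw [h]; exact h25
  have hspan := (EuclideanSpace.basisFun (Fin (2*m+5)) ℝ).toBasis.span_eq
  refine le_trans (le_of_eq hspan.symm) (Submodule.span_le.mpr ?_)
  rintro _ ⟨i, rfl⟩
  have : (EuclideanSpace.basisFun (Fin (2*m+5)) ℝ).toBasis i
      = EuclideanSpace.single i 1 := by
    simp [EuclideanSpace.basisFun_apply]
  rw [this]
  exact hsingle i


noncomputable def basE (m : ℕ) : Module.Basis (Fin (2*m+5)) ℝ (EuclideanSpace ℝ (Fin (2*m+5))) :=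
  basisOfTopLeSpanOfCardEqFinrank (fun j : Fin (2*m+5) => Efun m ↑j) (span_Efun_top m)
    (by simp)

lemma basE_coe (m : ℕ) : ⇑(basE m) = fun j : Fin (2*m+5) => Efun m ↑j :=
  coe_basisOfTopLeSpanOfCardEqFinrank _ _ _

noncomputable def basE2 (m : ℕ) : Module.Basis (Fin (2*m+5)) ℝ (EuclideanSpace ℝ (Fin (2*m+5))) :=
  basisOfTopLeSpanOfCardEqFinrank (fun j : Fin (2*m+5) => E2fun m ↑j) (span_E2fun_top m)
    (by simp)

lemma basE2_coe (m : ℕ) : ⇑(basE2 m) = fun j : Fin (2*m+5) => E2fun m ↑j :=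
  coe_basisOfTopLeSpanOfCardEqFinrank _ _ _

lemma inner_gen_u {m i : ℕ} (h : i ≤ 2*m+2) : ⟪E2fun m i, uvec m⟫ = 0 := by
  rcases (by omega : i < 2*m+1 ∨ i = 2*m+1 ∨ i = 2*m+2) with hi | hi | hi
  · rw [E2fun_lo hi, inner_sub_left, uvec,
      inner_eps_sum (by omega) (by omega) (by omega),
      inner_eps_sum (by omega) (by omega) (by omega),
      if_pos (by omega), if_pos (by omega)]
    ring
  · rw [hi, E2fun_hi, inner_sub_left, uvec,
      inner_eps_sum (by omega) (by omega) (by omega),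
      inner_eps_sum (by omega) (by omega) (by omega),
      if_neg (by omega), if_neg (by omega)]
    ring
  · rw [hi, E2fun_n, uvec, inner_eps_sum (by omega) (by omega) (by omega),
      if_neg (by omega)]

lemma inner_gen_v {m i : ℕ} (h : i ≤ 2*m+2) : ⟪E2fun m i, vvec m⟫ = 0 := by
  rcases (by omega : i < 2*m+1 ∨ i = 2*m+1 ∨ i = 2*m+2) with hi | hi | hi
  · rw [E2fun_lo hi, vvec, inner_sub_left, inner_add_right, inner_add_right,
      inner_eps, inner_eps, inner_eps, inner_eps,
      if_neg (by omega), if_neg (by omega), if_neg (by omega), if_neg (by omega)]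
    ring
  · rw [hi, E2fun_hi, vvec, inner_sub_left, inner_add_right, inner_add_right,
      inner_eps, inner_eps, inner_eps, inner_eps,
      if_pos (by constructor <;> omega), if_neg (by omega), if_neg (by omega),
      if_pos (by constructor <;> omega)]
    ring
  · rw [hi, E2fun_n, vvec, inner_add_right, inner_eps, inner_eps,
      if_neg (by omega), if_neg (by omega)]
    ring

lemma sum_split {M : ℕ} {A : Type*} [AddCommMonoid A] (g : Fin (M+2) → A) :
    ∑ j, g j = (∑ i : Fin M, g (Fin.castLE (by omega) i))
      + g ⟨M, by omega⟩ + g ⟨M+1, by omega⟩ := by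
  rw [Fin.sum_univ_castSucc, Fin.sum_univ_castSucc]
  rfl


lemma S_eq (m : ℕ) :
    ({v | ∃ i, 1 ≤ i ∧ i ≤ m ∧ v = eps (2*m+5) (2*i-1) + eps (2*m+5) (2*i)}
      ∪ {eps (2*m+5) (2*m+1) + eps (2*m+5) (2*m+3),
         eps (2*m+5) (2*m+2) + eps (2*m+5) (2*m+5),
         eps (2*m+5) (2*m+2) - eps (2*m+5) (2*m+5)}
      ∪ {v | ∃ k, 1 ≤ k ∧ k ≤ m ∧ v = eps (2*m+5) (2*m+2-k) - eps (2*m+5) k})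
    = Set.range (fun i : Fin (2*m+3) => Efun m ↑i) := by
  ext x
  simp only [Set.mem_union, Set.mem_range, Set.mem_setOf_eq, Set.mem_insert_iff,
    Set.mem_singleton_iff]
  constructor
  · rintro ((⟨i, h1, h2, rfl⟩ | (rfl | rfl | rfl)) | ⟨k, h1, h2, rfl⟩)
    · refine ⟨⟨i-1, by omega⟩, ?_⟩
      show Efun m (i-1) = _
      rw [Efun_A (by omega : i-1 < m)]
      rw [show 2*(i-1)+1 = 2*i-1 from by omega, show 2*(i-1)+2 = 2*i from by omega]
    · exact ⟨⟨m, by omega⟩, Efun_B1 m⟩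
    · exact ⟨⟨m+1, by omega⟩, Efun_B2 m⟩
    · exact ⟨⟨m+2, by omega⟩, Efun_B3 m⟩
    · exact ⟨⟨m+2+k, by omega⟩, Efun_C h1 h2⟩
  · rintro ⟨i, rfl⟩
    rcases (by omega : (i:ℕ) < m ∨ (i:ℕ) = m ∨ (i:ℕ) = m+1 ∨ (i:ℕ) = m+2
        ∨ (m+3 ≤ (i:ℕ) ∧ (i:ℕ) < 2*m+3)) with h | h | h | h | h
    · left; left
      refine ⟨(i:ℕ)+1, by omega, by omega, ?_⟩
      rw [Efun_A h, show 2*((i:ℕ)+1)-1 = 2*(i:ℕ)+1 from by omega,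
        show 2*((i:ℕ)+1) = 2*(i:ℕ)+2 from by omega]
    · left; right; left; rw [h]; exact Efun_B1 m
    · left; right; right; left; rw [h]; exact Efun_B2 m
    · left; right; right; right; rw [h]; exact Efun_B3 m
    · right
      refine ⟨(i:ℕ)-m-2, by omega, by omega, ?_⟩
      have hc := Efun_C (m := m) (k := (i:ℕ)-m-2) (by omega) (by omega)
      rw [show m+2+((i:ℕ)-m-2) = (i:ℕ) from by omega] at hc
      exact hc

lemma G_eq (m : ℕ) :
    ({v | ∃ k, 1 ≤ k ∧ k ≤ 2*m+5 ∧ k ≠ 2*m+2 ∧ k ≠ 2*m+4 ∧ k ≠ 2*m+5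
        ∧ v = corootD (2*m+5) k} ∪ {eps (2*m+5) (2*m+5)})
    = Set.range (fun i : Fin (2*m+3) => E2fun m ↑i) := by
  ext x
  simp only [Set.mem_union, Set.mem_range, Set.mem_setOf_eq, Set.mem_singleton_iff]
  constructor
  · rintro (⟨k, h1, h2, h3, h4, h5, rfl⟩ | rfl)
    · have hcor : corootD (2*m+5) k = eps (2*m+5) k - eps (2*m+5) (k+1) := by
        simp only [corootD, if_neg h5]
      rcases (by omega : k ≤ 2*m+1 ∨ k = 2*m+3) with hk | hk
      · refine ⟨⟨k-1, by omega⟩, ?_⟩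
        show E2fun m (k-1) = _
        rw [E2fun_lo (by omega), hcor, show k-1+1 = k from by omega,
          show k-1+2 = k+1 from by omega]
      · refine ⟨⟨2*m+1, by omega⟩, ?_⟩
        show E2fun m (2*m+1) = _
        rw [E2fun_hi, hcor, hk]
    · exact ⟨⟨2*m+2, by omega⟩, E2fun_n m⟩
  · rintro ⟨i, rfl⟩
    rcases (by omega : (i:ℕ) < 2*m+1 ∨ (i:ℕ) = 2*m+1 ∨ (i:ℕ) = 2*m+2) with h | h | h
    · left
      refine ⟨(i:ℕ)+1, by omega, by omega, by omega, by omega, by omega, ?_⟩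
      rw [E2fun_lo h]
      simp only [corootD, if_neg (by omega : (i:ℕ)+1 ≠ 2*m+5)]
    · left
      refine ⟨2*m+3, by omega, by omega, by omega, by omega, by omega, ?_⟩
      rw [h, E2fun_hi]
      simp only [corootD, if_neg (by omega : 2*m+3 ≠ 2*m+5)]
    · right; rw [h]; exact E2fun_n m

end St19

set_option maxHeartbeats 1000000 in
open St19 in
/-- Type `D_n`, `n ≥ 5` odd,
`π' = π \ {α_{n-3}, α_{n-1}, α_n}`. With
`S = {ε_{2i-1} + ε_{2i} : 1 ≤ i ≤ (n-5)/2} ∪ {ε_{n-4} + ε_{n-2},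
ε_{n-3} + ε_n, ε_{n-3} - ε_n} ∪ {ε_{n-3-k} - ε_k : 1 ≤ k ≤ (n-5)/2}` and
`h_Λ = span{α^∨ : α ∈ π'} ⊕ k·H⁻¹(ε_n)` (where `H⁻¹(ε_n)` pairs with a weight
`λ` as `(λ, ε_n)`), the restrictions of the elements of `S` to `h_Λ` form a
basis of `h_Λ^*`; in particular `|S| = n - 2 = dim h_Λ`. -/
theorem statement_19 (n : ℕ) (hn : 5 ≤ n) (hnodd : Odd n)
    (S : Set (EuclideanSpace ℝ (Fin n)))
    (hS : S = {v | ∃ i, 1 ≤ i ∧ i ≤ (n - 5) / 2 ∧ v = eps n (2 * i - 1) + eps n (2 * i)}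
        ∪ {eps n (n - 4) + eps n (n - 2), eps n (n - 3) + eps n n, eps n (n - 3) - eps n n}
        ∪ {v | ∃ k, 1 ≤ k ∧ k ≤ (n - 5) / 2 ∧ v = eps n (n - 3 - k) - eps n k})
    (hΛ : Submodule ℝ (EuclideanSpace ℝ (Fin n)))
    (hhΛ : hΛ = Submodule.span ℝ
        ({v | ∃ k, 1 ≤ k ∧ k ≤ n ∧ k ≠ n - 3 ∧ k ≠ n - 1 ∧ k ≠ n ∧ v = corootD n k}
          ∪ {eps n n})) :
    S.ncard = n - 2 ∧ Module.finrank ℝ hΛ = n - 2 ∧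
    LinearIndependent ℝ (fun x : S => restrictedInner (x : EuclideanSpace ℝ (Fin n)) hΛ) ∧
    Submodule.span ℝ
      (Set.range (fun x : S => restrictedInner (x : EuclideanSpace ℝ (Fin n)) hΛ)) = ⊤ := by
  obtain ⟨m, rfl⟩ : ∃ m, n = 2*m+5 := by
    obtain ⟨j, hj⟩ := hnodd
    exact ⟨j-2, by omega⟩
  clear hn hnodd
  simp only [show (2*m+5-5)/2 = m from by omega, show 2*m+5-4 = 2*m+1 from by omega,
    show 2*m+5-3 = 2*m+2 from by omega, show 2*m+5-2 = 2*m+3 from by omega,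
    show 2*m+5-1 = 2*m+4 from by omega] at hS hhΛ ⊢
  rw [S_eq m] at hS
  rw [G_eq m] at hhΛ
  -- basic independence facts
  have hblin : LinearIndependent ℝ (fun j : Fin (2*m+5) => Efun m ↑j) := by
    rw [← basE_coe m]; exact (basE m).linearIndependent
  have hEinj : Function.Injective (fun j : Fin (2*m+5) => Efun m ↑j) := by
    rw [← basE_coe m]; exact (basE m).injective
  have hE2lin : LinearIndependent ℝ (fun j : Fin (2*m+5) => E2fun m ↑j) := by
    rw [← basE2_coe m]; exact (basE2 m).linearIndependent
  have hfGlin : LinearIndependent ℝ (fun i : Fin (2*m+3) => E2fun m ↑i) :=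
    hE2lin.comp (Fin.castLE (by omega)) (Fin.castLE_injective _)
  have hrank : Module.finrank ℝ hΛ = 2*m+3 := by
    rw [hhΛ, finrank_span_eq_card hfGlin]
    simp
  -- orthogonal complement
  have hPle : Submodule.span ℝ {uvec m, vvec m} ≤ hΛᗮ := by
    have h1 : hΛ ≤ (Submodule.span ℝ {uvec m, vvec m})ᗮ := by
      rw [hhΛ]
      refine Submodule.span_le.mpr ?_
      rintro _ ⟨i, rfl⟩
      rw [SetLike.mem_coe, Submodule.mem_orthogonal']
      intro w hw
      obtain ⟨a, b, rfl⟩ := Submodule.mem_span_pair.mp hw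
      rw [inner_add_right, inner_smul_right, inner_smul_right,
        inner_gen_u (by omega), inner_gen_v (by omega)]
      ring
    exact le_trans (Submodule.le_orthogonal_orthogonal _) (Submodule.orthogonal_le h1)
  have embinj : Function.Injective (fun t : Fin 2 => (⟨2*m+3+↑t, by omega⟩ : Fin (2*m+5))) := by
    intro a b hab
    have h2 : (2*m+3+(a:ℕ)) = (2*m+3+(b:ℕ)) := congrArg Fin.val hab
    exact Fin.ext (by omega)
  have huvlin : LinearIndependent ℝ ((fun j : Fin (2*m+5) => Efun m ↑j)
      ∘ (fun t : Fin 2 => (⟨2*m+3+↑t, by omega⟩ : Fin (2*m+5)))) :=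
    hblin.comp _ embinj
  have hrangeuv : Set.range ((fun j : Fin (2*m+5) => Efun m ↑j)
      ∘ (fun t : Fin 2 => (⟨2*m+3+↑t, by omega⟩ : Fin (2*m+5)))) = {uvec m, vvec m} := by
    ext x
    constructor
    · rintro ⟨t, rfl⟩
      show Efun m (2*m+3+(t:ℕ)) ∈ _
      rcases (by omega : (t:ℕ) = 0 ∨ (t:ℕ) = 1) with h | h
      · rw [h]
        left
        exact Efun_u m
      · rw [h]
        right
        rw [show 2*m+3+1 = 2*m+4 from rfl, Efun_v]
        rfl
    · rintro (rfl | rfl)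
      · exact ⟨0, Efun_u m⟩
      · exact ⟨1, Efun_v m⟩
  have horth : Submodule.span ℝ {uvec m, vvec m} = hΛᗮ := by
    apply Submodule.eq_of_le_of_finrank_le hPle
    have hsum := Submodule.finrank_add_finrank_orthogonal hΛ
    rw [hrank, finrank_euclideanSpace_fin] at hsum
    have hPrank : Module.finrank ℝ (Submodule.span ℝ ({uvec m, vvec m} :
        Set (EuclideanSpace ℝ (Fin (2*m+5))))) = 2 := by
      rw [← hrangeuv, finrank_span_eq_card huvlin]
      simp
    rw [hPrank]
    omega
  -- the restriction linear map
  set L : EuclideanSpace ℝ (Fin (2*m+5)) →ₗ[ℝ] Module.Dual ℝ hΛ :=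
    { toFun := fun x => restrictedInner x hΛ
      map_add' := by
        intro x y
        ext w
        simp [restrictedInner, inner_add_left]
      map_smul' := by
        intro c x
        ext w
        simp [restrictedInner, inner_smul_left] } with hL
  have hLapp : ∀ x, L x = restrictedInner x hΛ := fun _ => rfl
  have hkerL : ∀ x, L x = 0 ↔ x ∈ hΛᗮ := by
    intro x
    constructor
    · intro h
      rw [Submodule.mem_orthogonal']
      intro w hw
      have := LinearMap.congr_fun h ⟨w, hw⟩
      simpa [restrictedInner, hL] using this
    · intro h
      ext w
      have := (Submodule.mem_orthogonal' hΛ x).mp h ↑w w.2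
      simpa [restrictedInner, hL] using this
  -- linear независимость of restricted functionals
  have hLlin : LinearIndependent ℝ (fun i : Fin (2*m+3) => L (Efun m ↑i)) := by
    rw [Fintype.linearIndependent_iff]
    intro c hc
    have hLx : L (∑ i : Fin (2*m+3), c i • Efun m ↑i) = 0 := by
      rw [map_sum]
      simp only [map_smul]
      exact hc
    have hxo : (∑ i : Fin (2*m+3), c i • Efun m ↑i) ∈ hΛᗮ := (hkerL _).mp hLx
    rw [← horth] at hxo
    obtain ⟨a, b, hab⟩ := Submodule.mem_span_pair.mp hxo
    set d : Fin (2*m+5) → ℝ := fun j =>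
      if h : (j:ℕ) < 2*m+3 then c ⟨j, h⟩ else if (j:ℕ) = 2*m+3 then -a else -b with hd
    have hd1 : ∀ i : Fin (2*m+3), d (Fin.castLE (by omega) i) = c i := by
      intro i
      simp only [hd]
      rw [dif_pos (show ((Fin.castLE (by omega) i : Fin (2*m+5)):ℕ) < 2*m+3 from i.isLt)]
      exact congrArg c (Fin.ext rfl)
    have hd2 : d ⟨2*m+3, by omega⟩ = -a := by
      simp only [hd]
      rw [dif_neg (show ¬((2*m+3:ℕ) < 2*m+3) from by omega)]
      simp
    have hd3 : d ⟨2*m+4, by omega⟩ = -b := by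
      simp only [hd]
      rw [dif_neg (show ¬((2*m+4:ℕ) < 2*m+3) from by omega)]
      rw [if_neg (show ¬((2*m+4:ℕ) = 2*m+3) from by omega)]
    have hsum : ∑ j : Fin (2*m+5), d j • Efun m ↑j = 0 := by
      have hsplit := St19.sum_split (M := 2*m+3)
        (fun j : Fin (2*m+3+2) => d j • Efun m ↑j)
      rw [hsplit]
      simp only [hd2, hd3]
      have : ∀ i : Fin (2*m+3),
          d (Fin.castLE (by omega) i) • Efun m ↑(Fin.castLE (by omega : 2*m+3 ≤ 2*m+3+2) i)
            = c i • Efun m ↑i := by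
        intro i
        rw [hd1 i]
        rfl
      rw [Finset.sum_congr rfl (fun i _ => this i)]
      have hu' : Efun m ((⟨2*m+3, by omega⟩ : Fin (2*m+3+2)) : ℕ) = uvec m := Efun_u m
      have hv' : Efun m ((⟨2*m+3+1, by omega⟩ : Fin (2*m+3+2)) : ℕ) = vvec m := Efun_v m
      rw [hu', hv', ← hab]
      module
    have hall := Fintype.linearIndependent_iff.mp hblin d hsum
    intro i
    have := hall (Fin.castLE (by omega) i)
    rw [hd1 i] at this
    exact this
  -- correspondence between S and the index family
  have hmemS : ∀ i : Fin (2*m+3), Efun m ↑i ∈ S := by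
    intro i
    rw [hS]
    exact ⟨i, rfl⟩
  have hfSinj : Function.Injective (fun i : Fin (2*m+3) => Efun m ↑i) := by
    intro a b hab
    have : Fin.castLE (show 2*m+3 ≤ 2*m+5 by omega) a
        = Fin.castLE (by omega) b := hEinj hab
    exact Fin.castLE_injective _ this
  set gg : Fin (2*m+3) → S := fun i => ⟨Efun m ↑i, hmemS i⟩ with hgg
  have hggbij : Function.Bijective gg := by
    constructor
    · intro a b hab
      exact hfSinj (congrArg Subtype.val hab)
    · intro x
      have hx : ↑x ∈ Set.range (fun i : Fin (2*m+3) => Efun m ↑i) := by rw [← hS]; exact x.2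
      obtain ⟨i, hi⟩ := hx
      exact ⟨i, Subtype.ext hi⟩
  set eS := Equiv.ofBijective gg hggbij with heS
  have hfamS : (fun x : S => restrictedInner (x : EuclideanSpace ℝ (Fin (2*m+5))) hΛ)
      = (fun i : Fin (2*m+3) => L (Efun m ↑i)) ∘ eS.symm := by
    funext x
    have h1 : Efun m ↑(eS.symm x) = ↑x := congrArg Subtype.val (eS.apply_symm_apply x)
    show restrictedInner (↑x) hΛ = L (Efun m ↑(eS.symm x))
    rw [h1, hLapp]
  refine ⟨?_, ?_, ?_, ?_⟩
  · rw [hS, ← Nat.card_coe_set_eq,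
      Nat.card_congr (Equiv.ofInjective _ hfSinj).symm]
    simp [Nat.card_eq_fintype_card]
  · exact hrank
  · rw [hfamS]
    exact hLlin.comp _ eS.symm.injective
  · rw [hfamS, Function.Surjective.range_comp eS.symm.surjective]
    apply Submodule.eq_top_of_finrank_eq
    rw [finrank_span_eq_card hLlin, Subspace.dual_finrank_eq, hrank]
    simp
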